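/- Let h be a fully symmetric 3-tensor on ℝ² (i.e., h : Fin 2 → Fin 2 → Fin 2 → ℝ with h i j k invariant under all permutations of indices), and define H k = ∑ i, h i i k. Then ∑ k, (H k)² ≤ (4/3) * ∑ i j k, (h i j k)². -/
import Mathlib

/-- For a fully symmetric 3-tensor `h` on ℝ², with `H k = ∑ i, h i i k`,
we have `∑ k, (H k)² ≤ (4/3) * ∑ i j k, (h i j k)²`. -/
theorem symmetric_three_tensor_trace_sq_le (h : Fin 2 → Fin 2 → Fin 2 → ℝ)
    (hsym1 : ∀ i j k, h i j k = h j i k)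
    (hsym2 : ∀ i j k, h i j k = h i k j) :
    ∑ k, (∑ i, h i i k) ^ 2 ≤ (4 / 3) * ∑ i, ∑ j, ∑ k, (h i j k) ^ 2 := by
  simp only [Fin.sum_univ_two]
  have e1 : h 0 0 1 = h 0 1 0 := hsym2 0 0 1
  have e2 : h 1 0 0 = h 0 1 0 := by rw [hsym1]; 
  have e3 : h 1 1 0 = h 0 1 1 := by rw [hsym1 1 1 0, hsym2 1 1 0, hsym1]
  have e4 : h 1 0 1 = h 0 1 1 := by rw [hsym1]
  rw [e1, e2, e3, e4]
  nlinarith [sq_nonneg (h 0 0 0 - 3 * h 0 1 1), sq_nonneg (h 1 1 1 - 3 * h 0 1 0)]
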